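/- Let k, l ≥ 0 and let λ = (1^k,2^l) be the partition of k+2l with k parts equal to 1 and l parts equal to 2. For every partition μ of k+2l, K^{-1}_{(1^k,2^l),μ} = 0 unless μ = (1^{k+2t},2^{l−t}) for some 0 ≤ t ≤ l, and in that case K^{-1}_{(1^k,2^l),(1^{k+2t},2^{l−t})} = (−1)^t · (k+t)! / (k!·t!). -/

import Mathlib

open Finset MvPolynomial

/-- The `p`-th entry of an `n`-tuple, with default value `0` out of range. -/
def nth (n : ℕ) (f : Fin n → ℕ) (p : ℕ) : ℕ := if h : p < n then f ⟨p, h⟩ else 0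

/-- `a_α = det (x_j ^ α_i)`. -/
noncomputable def aDet (n : ℕ) (α : Fin n → ℕ) : MvPolynomial (Fin n) ℤ :=
  (Matrix.of fun i j : Fin n => (X j : MvPolynomial (Fin n) ℤ) ^ α i).det

/-- `x ^ β = ∏ x_i ^ β_i`. -/
noncomputable def xpow (n : ℕ) (β : Fin n → ℕ) : MvPolynomial (Fin n) ℤ :=
  ∏ i, X i ^ β i

/-- The monomial symmetric polynomial `m_lam(n) = Σ_{w ∈ Sₙ^lam} x^{w(lam)}`:
the sum of `x^β` over all distinct rearrangements `β` of `lam`. -/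
noncomputable def msym (n : ℕ) (lam : Fin n → ℕ) : MvPolynomial (Fin n) ℤ :=
  ∑ β ∈ Finset.univ.image (fun σ : Equiv.Perm (Fin n) => lam ∘ σ), xpow n β

/-- `δ(n) = (0, 1, …, n-1)`. -/
def deltaN (n : ℕ) : Fin n → ℕ := fun i => (i : ℕ)

/-- `P(m∣n)`: partitions of `m` as nondecreasing `n`-tuples (zeros at the beginning). -/
def Par (n m : ℕ) : Finset (Fin n → ℕ) :=
  (Fintype.piFinset fun _ : Fin n => Finset.range (m + 1)).filter
    fun μ => (∀ i j : Fin n, i ≤ j → μ i ≤ μ j) ∧ ∑ i, μ i = m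

/-- `K` is the inverse Kostka matrix in `n` variables: for every weight `m` and
every `lam ∈ P(m∣n)`, `m_lam(n) · a_{δ(n)} = Σ_{μ ∈ P(m∣n)} K lam μ · a_{μ+δ(n)}`
(equivalently `m_lam(n) = Σ_μ K lam μ · s_μ(n)`). -/
def IsInvKostka (n : ℕ) (K : (Fin n → ℕ) → (Fin n → ℕ) → ℤ) : Prop :=
  ∀ m : ℕ, ∀ lam ∈ Par n m,
    msym n lam * aDet n (deltaN n) =
      ∑ μ ∈ Par n m, C (K lam μ) * aDet n (fun i => μ i + (i : ℕ))

/-- The partition `(1^a, 2^b, 3^c)` as a nondecreasing `n`-tuple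
(requires `a + b + c ≤ n`). -/
def tuple3 (n a b c : ℕ) : Fin n → ℕ :=
  fun i => if (i : ℕ) < n - a - b - c then 0
    else if (i : ℕ) < n - b - c then 1
    else if (i : ℕ) < n - c then 2 else 3

/-- Fibonacci-like polynomial: `G k = Σ_t (-1)^t C(k-t,t) X^t`. -/
noncomputable def Gpoly : ℕ → Polynomial ℤ
  | 0 => 1
  | 1 => 1
  | (k+2) => Gpoly (k+1) - Polynomial.X * Gpoly k

lemma Gpoly_coeff : ∀ k t : ℕ, (Gpoly k).coeff t = (-1)^t * (Nat.choose (k - t) t : ℤ)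
  | 0, t => by
    cases t with
    | zero => simp [Gpoly]
    | succ s => simp [Gpoly, Polynomial.coeff_one, Nat.choose_eq_zero_of_lt (by omega : (0:ℕ) - (s+1) < s+1)]
  | 1, t => by
    match t with
    | 0 => simp [Gpoly]
    | 1 => simp [Gpoly, Polynomial.coeff_one]
    | (s+2) => simp [Gpoly, Polynomial.coeff_one, Nat.choose_eq_zero_of_lt (by omega : (1:ℕ) - (s+2) < s+2)]
  | (k+2), t => by
    rw [Gpoly, Polynomial.coeff_sub, Gpoly_coeff (k+1) t]
    cases t with
    | zero => simp
    | succ s =>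
      rw [Polynomial.coeff_X_mul, Gpoly_coeff k s]
      rcases Nat.lt_or_ge (s+1) (k+2) with h | h
      · have h1 : k + 2 - (s+1) = (k+1-(s+1)) + 1 := by omega
        have h2 : k - s = k + 1 - (s+1) := by omega
        rw [h1, h2, Nat.choose_succ_succ (k+1-(s+1)) s]
        push_cast
        ring
      · have h1 : Nat.choose (k+2-(s+1)) (s+1) = 0 := by
          apply Nat.choose_eq_zero_of_lt; omega
        have h2 : Nat.choose (k+1-(s+1)) (s+1) = 0 := by
          apply Nat.choose_eq_zero_of_lt; omega
        have h3 : Nat.choose (k-s) s = 0 := by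
          apply Nat.choose_eq_zero_of_lt; omega
        rw [h1, h2, h3]
        ring


/-- the entry profile of the banded matrix -/
noncomputable def Ent (p c : ℕ) : Polynomial ℤ :=
  if p + 2 = c then Polynomial.X else if p + 1 = c then 1 else if p = c then 1 else 0

lemma Ent_shift (p c : ℕ) : Ent (p+1) (c+1) = Ent p c := by
  unfold Ent
  simp only [show (p+1+2 = c+1) ↔ (p+2 = c) by omega,
      show (p+1+1 = c+1) ↔ (p+1 = c) by omega,
      show (p+1 = c+1) ↔ (p = c) by omega]

lemma Ent_zero (p c : ℕ) (h : ¬ (c ≤ p + 2 ∧ p ≤ c)) : Ent p c = 0 := by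
  unfold Ent
  rw [if_neg (by omega), if_neg (by omega), if_neg (by omega)]

/-- the banded matrix attached to `μ` -/
noncomputable def Amat (n : ℕ) (μ : Fin n → ℕ) : Matrix (Fin n) (Fin n) (Polynomial ℤ) :=
  Matrix.of fun i j => Ent (j : ℕ) (μ i + (i : ℕ))

lemma tuple3_apply (n a b : ℕ) (i : Fin n) :
    tuple3 n a b 0 i = if (i : ℕ) < n - a - b then 0 else if (i : ℕ) < n - b then 1 else 2 := by
  unfold tuple3
  have : (i : ℕ) < n - 0 := by omega
  simp only [Nat.sub_zero]
  split_ifs <;> omega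


lemma val_succAbove {n : ℕ} (p : Fin (n+1)) (i : Fin n) :
    (p.succAbove i : ℕ) = if (i:ℕ) < (p:ℕ) then (i:ℕ) else (i:ℕ)+1 := by
  rcases Nat.lt_or_ge (i : ℕ) (p : ℕ) with h | h
  · rw [Fin.succAbove_of_castSucc_lt p i (by simpa [Fin.lt_def] using h), if_pos h]
    simp
  · rw [Fin.succAbove_of_le_castSucc p i (by simpa [Fin.le_def] using h), if_neg (by omega)]
    simp

lemma sum_two {N : ℕ} (f : Fin N → Polynomial ℤ) (j₀ j₁ : Fin N) (hne : j₀ ≠ j₁)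
    (hz : ∀ j, j ≠ j₀ → j ≠ j₁ → f j = 0) : ∑ j, f j = f j₀ + f j₁ := by
  rw [← Finset.sum_pair hne]
  exact (Finset.sum_subset (Finset.subset_univ _) (fun x _ hx => by
    simp only [Finset.mem_insert, Finset.mem_singleton] at hx
    exact hz x (fun h => hx (Or.inl h)) (fun h => hx (Or.inr h)))).symm


lemma Gpoly_rec (a : ℕ) (ha : 2 ≤ a) :
    Gpoly a = Gpoly (a-1) - Polynomial.X * Gpoly (a-2) := by
  obtain ⟨a', rfl⟩ : ∃ a', a = a' + 2 := ⟨a-2, by omega⟩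
  show Gpoly (a'+2) = _
  rw [Gpoly, show a' + 2 - 1 = a' + 1 by omega, show a' + 2 - 2 = a' by omega]


theorem detAmat (n a b : ℕ) (hab : a + b ≤ n) :
    (Amat n (tuple3 n a b 0)).det = Polynomial.X ^ b * Gpoly a := by
  induction n using Nat.strong_induction_on generalizing a b with
  | _ n IH =>
  rcases Nat.eq_zero_or_pos n with rfl | hn
  · obtain rfl : a = 0 := by omega
    obtain rfl : b = 0 := by omega
    simp [Gpoly, Matrix.det_fin_zero]
  obtain ⟨m, rfl⟩ : ∃ m, n = m + 1 := ⟨n - 1, by omega⟩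
  have IH' : ∀ m' < m + 1, ∀ a b : ℕ, a + b ≤ m' → (Amat m' (tuple3 m' a b 0)).det = Polynomial.X ^ b * Gpoly a := by
    intro m' hm' a b h
    exact IH m' hm' a b h
  rcases Nat.lt_or_ge (a + b) (m+1) with hlt | hge
  · -- there is a zero part: row 0 is e₀
    have hrow0 : ∀ j : Fin (m+1), Amat (m+1) (tuple3 (m+1) a b 0) 0 j
        = if j = 0 then 1 else 0 := by
      intro j
      have h0 : tuple3 (m+1) a b 0 0 = 0 := by
        rw [tuple3_apply]; rw [if_pos (by simp; omega)]
      simp only [Amat, Matrix.of_apply, h0, Fin.val_zero, Nat.add_zero]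
      unfold Ent
      rw [if_neg (by omega), if_neg (by omega)]
      by_cases hj : j = 0
      · subst hj; simp
      · rw [if_neg (by simpa using fun h => hj (Fin.ext h)), if_neg hj]
    rw [Matrix.det_succ_row_zero]
    rw [Finset.sum_eq_single 0]
    · rw [hrow0 0, if_pos rfl]
      have hsub : (Amat (m+1) (tuple3 (m+1) a b 0)).submatrix Fin.succ (Fin.succAbove 0)
          = Amat m (tuple3 m a b 0) := by
        ext i j
        simp only [Matrix.submatrix_apply, Amat, Matrix.of_apply, Fin.succAbove_zero,
          Fin.val_succ]
        have h1 : tuple3 (m+1) a b 0 i.succ = tuple3 m a b 0 i := by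
          rw [tuple3_apply, tuple3_apply, Fin.val_succ]
          have := i.isLt
          split_ifs <;> omega
        rw [h1, show tuple3 m a b 0 i + (↑i + 1) = (tuple3 m a b 0 i + ↑i) + 1 by ring,
          Ent_shift]
      rw [hsub, IH' m (by omega) a b (by omega)]
      simp
    · intro j _ hj
      rw [hrow0 j, if_neg hj]; ring
    · simp
  have hab' : a + b = m + 1 := by omega
  rcases Nat.eq_zero_or_pos a with rfl | ha
  · -- a = 0 : all parts are 2
    obtain rfl : b = m + 1 := by omega
    have hcol : ∀ i : Fin (m+1), Amat (m+1) (tuple3 (m+1) 0 (m+1) 0) i 0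
        = if i = 0 then Polynomial.X else 0 := by
      intro i
      have h2 : tuple3 (m+1) 0 (m+1) 0 i = 2 := by
        rw [tuple3_apply]; rw [if_neg (by omega), if_neg (by omega)]
      simp only [Amat, Matrix.of_apply, h2, Fin.val_zero]
      by_cases hi : i = 0
      · subst hi; simp [Ent]
      · rw [if_neg hi, Ent_zero]
        have : (i:ℕ) ≠ 0 := fun h => hi (Fin.ext h)
        omega
    rw [Matrix.det_succ_column_zero, Finset.sum_eq_single 0]
    · rw [hcol 0, if_pos rfl]
      have hsub : (Amat (m+1) (tuple3 (m+1) 0 (m+1) 0)).submatrix (Fin.succAbove 0) Fin.succ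
          = Amat m (tuple3 m 0 m 0) := by
        ext i j
        simp only [Matrix.submatrix_apply, Amat, Matrix.of_apply, Fin.succAbove_zero,
          Fin.val_succ]
        have h1 : tuple3 (m+1) 0 (m+1) 0 i.succ = tuple3 m 0 m 0 i := by
          rw [tuple3_apply, tuple3_apply, Fin.val_succ]
          have := i.isLt
          split_ifs <;> omega
        rw [h1, show tuple3 m 0 m 0 i + (↑i + 1) = (tuple3 m 0 m 0 i + ↑i) + 1 by ring,
          Ent_shift]
      rw [hsub, IH' m (by omega) 0 m (by omega)]
      simp only [Fin.val_zero, pow_zero, mul_one, pow_succ]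
      ring
    · intro i _ hi
      rw [hcol i, if_neg hi]; ring
    · simp
  -- a ≥ 1
  rcases Nat.eq_zero_or_pos m with rfl | hm
  · obtain rfl : a = 1 := by omega
    obtain rfl : b = 0 := by omega
    rw [show (Amat 1 (tuple3 1 1 0 0)).det = Amat 1 (tuple3 1 1 0 0) 0 0 from
      Matrix.det_fin_one _]
    have h1 : tuple3 1 1 0 0 0 = 1 := by
      rw [tuple3_apply]
      simp
    simp [Amat, h1, Ent, Gpoly]
  have hc0 : tuple3 (m+1) a b 0 0 = 1 := by
    rw [tuple3_apply]
    simp only [Fin.val_zero]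
    split_ifs <;> simp_all <;> omega
  set A := Amat (m+1) (tuple3 (m+1) a b 0) with hA
  set j₁ : Fin (m+1) := ⟨1, by omega⟩ with hj₁
  have hrow : ∀ j : Fin (m+1), A 0 j = if j = 0 then 1 else if j = j₁ then 1 else 0 := by
    intro j
    simp only [hA, Amat, Matrix.of_apply, hc0, Fin.val_zero, Nat.add_zero]
    by_cases h0 : j = 0
    · subst h0; simp [Ent]
    rw [if_neg h0]
    by_cases h1 : j = j₁
    · subst h1; rw [if_pos rfl]; simp [Ent, hj₁]
    · rw [if_neg h1, Ent_zero]
      have e0 : (j:ℕ) ≠ 0 := fun h => h0 (Fin.ext h)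
      have e1 : (j:ℕ) ≠ 1 := fun h => h1 (Fin.ext (by simpa [hj₁] using h))
      omega
  have hsub0 : A.submatrix Fin.succ (Fin.succAbove 0) = Amat m (tuple3 m (a-1) b 0) := by
    ext i j
    simp only [hA, Matrix.submatrix_apply, Amat, Matrix.of_apply, Fin.succAbove_zero,
      Fin.val_succ]
    have h1 : tuple3 (m+1) a b 0 i.succ = tuple3 m (a-1) b 0 i := by
      rw [tuple3_apply, tuple3_apply, Fin.val_succ]
      have := i.isLt
      split_ifs <;> omega
    rw [h1, show tuple3 m (a-1) b 0 i + (↑i + 1) = (tuple3 m (a-1) b 0 i + ↑i) + 1 by ring,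
      Ent_shift]
  have hB : (A.submatrix Fin.succ j₁.succAbove).det
      = if a = 1 then 0 else Polynomial.X * (Polynomial.X ^ b * Gpoly (a-2)) := by
    rcases Nat.lt_or_ge a 2 with ha1 | ha2
    · obtain rfl : a = 1 := by omega
      rw [if_pos rfl]
      apply Matrix.det_eq_zero_of_column_eq_zero ⟨0, by omega⟩
      intro i
      simp only [hA, Matrix.submatrix_apply, Amat, Matrix.of_apply]
      have hcol : ((j₁.succAbove ⟨0, by omega⟩ : Fin (m+1)) : ℕ) = 0 := by
        rw [val_succAbove]; simp [hj₁]
      rw [hcol]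
      have h2 : tuple3 (m+1) 1 b 0 i.succ = 2 := by
        rw [tuple3_apply, Fin.val_succ]
        rw [if_neg (by omega), if_neg (by omega)]
      rw [h2, Ent_zero]; simp [Fin.val_succ]
    · rw [if_neg (by omega)]
      rcases Nat.lt_or_ge m 2 with hm1 | hm2
      · -- m = 1, a = 2, b = 0
        obtain rfl : m = 1 := by omega
        obtain rfl : a = 2 := by omega
        obtain rfl : b = 0 := by omega
        rw [show ((A.submatrix Fin.succ j₁.succAbove)).det
            = A.submatrix Fin.succ j₁.succAbove 0 0 from Matrix.det_fin_one _]
        simp only [hA, Matrix.submatrix_apply, Amat, Matrix.of_apply]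
        have hcol : (j₁.succAbove 0 : ℕ) = 0 := by rw [val_succAbove]; simp [hj₁]
        rw [hcol]
        have h1 : tuple3 2 2 0 0 (Fin.succ 0) = 1 := by
          rw [tuple3_apply, Fin.val_succ, Fin.val_zero]
          rw [if_neg (by omega), if_pos (by omega)]
        rw [h1]
        simp [Ent, Gpoly, Fin.val_succ]
      · -- m ≥ 2
        obtain ⟨p, rfl⟩ : ∃ p, m = p + 2 := ⟨m - 2, by omega⟩
        set B := A.submatrix Fin.succ j₁.succAbove with hBdef
        set j₂ : Fin (p+2) := ⟨1, by omega⟩ with hj₂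
        have hrowB : ∀ j : Fin (p+2), B 0 j
            = if j = 0 then Polynomial.X else if j = j₂ then 1 else 0 := by
          intro j
          simp only [hBdef, hA, Matrix.submatrix_apply, Amat, Matrix.of_apply]
          have hr : tuple3 (p+2+1) a b 0 (Fin.succ 0) = 1 := by
            rw [tuple3_apply, Fin.val_succ, Fin.val_zero]
            rw [if_neg (by omega), if_pos (by omega)]
          rw [hr, Fin.val_succ, Fin.val_zero]
          by_cases h0 : j = 0
          · subst h0
            rw [if_pos rfl]
            have : (j₁.succAbove 0 : ℕ) = 0 := by rw [val_succAbove]; simp [hj₁]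
            rw [this]; simp [Ent]
          rw [if_neg h0]
          by_cases h1 : j = j₂
          · subst h1
            rw [if_pos rfl]
            have : (j₁.succAbove j₂ : ℕ) = 2 := by rw [val_succAbove]; simp [hj₁, hj₂]
            rw [this]; simp [Ent]
          · rw [if_neg h1]
            have e0 : (j:ℕ) ≠ 0 := fun h => h0 (Fin.ext h)
            have e1 : (j:ℕ) ≠ 1 := fun h => h1 (Fin.ext (by simpa [hj₂] using h))
            have : (j₁.succAbove j : ℕ) = (j:ℕ) + 1 := by
              rw [val_succAbove]; rw [if_neg (by simp [hj₁]; omega)]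
            rw [this, Ent_zero]; omega
        rw [Matrix.det_succ_row_zero, sum_two _ 0 j₂ (by simp [hj₂, Fin.ext_iff])]
        · have hC1 : B.submatrix Fin.succ (Fin.succAbove 0)
              = Amat (p+1) (tuple3 (p+1) (a-2) b 0) := by
            ext i j
            simp only [hBdef, hA, Matrix.submatrix_apply, Amat, Matrix.of_apply,
              Fin.succAbove_zero]
            have hcv : (j₁.succAbove j.succ : ℕ) = (j:ℕ) + 2 := by
              rw [val_succAbove, Fin.val_succ]
              rw [if_neg (by simp [hj₁])]
            rw [hcv]
            have h1 : tuple3 (p+2+1) a b 0 i.succ.succ = tuple3 (p+1) (a-2) b 0 i := by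
              rw [tuple3_apply, tuple3_apply, Fin.val_succ, Fin.val_succ]
              have := i.isLt
              split_ifs <;> omega
            rw [h1, Fin.val_succ, Fin.val_succ,
              show tuple3 (p+1) (a-2) b 0 i + (↑i + 1 + 1) = ((tuple3 (p+1) (a-2) b 0 i + ↑i) + 1) + 1 by ring,
              show (j:ℕ) + 2 = ((j:ℕ) + 1) + 1 by ring, Ent_shift, Ent_shift]
          have hC2 : (B.submatrix Fin.succ j₂.succAbove).det = 0 := by
            apply Matrix.det_eq_zero_of_column_eq_zero 0
            intro i
            simp only [hBdef, hA, Matrix.submatrix_apply, Amat, Matrix.of_apply]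
            have hc2 : (j₂.succAbove 0 : ℕ) = 0 := by rw [val_succAbove]; simp [hj₂]
            have hc2' : (j₁.succAbove (j₂.succAbove 0) : ℕ) = 0 := by
              rw [val_succAbove, hc2]; simp [hj₁]
            rw [hc2']
            have hge1 : 1 ≤ tuple3 (p+2+1) a b 0 i.succ.succ := by
              rw [tuple3_apply]
              rw [if_neg (by omega)]
              split_ifs <;> omega
            rw [Ent_zero]
            rw [Fin.val_succ, Fin.val_succ]
            omega
          rw [hrowB 0, hrowB j₂, if_pos rfl, if_neg (by simp [hj₂, Fin.ext_iff]), if_pos rfl,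
            hC1, hC2, IH' (p+1) (by omega) (a-2) b (by omega)]
          simp [hj₂]
        · intro j hj0 hj2
          rw [hrowB j, if_neg hj0, if_neg hj2]
          ring
  -- now expand A itself
  rw [Matrix.det_succ_row_zero, sum_two _ 0 j₁ (by simp [hj₁, Fin.ext_iff])]
  · rw [hrow 0, hrow j₁, if_pos rfl, if_neg (by simp [hj₁, Fin.ext_iff]), if_pos rfl,
      hsub0, hB, IH' m (by omega) (a-1) b (by omega)]
    rcases Nat.lt_or_ge a 2 with ha1 | ha2
    · obtain rfl : a = 1 := by omega
      simp [hj₁, Gpoly]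
    · rw [if_neg (by omega), Gpoly_rec a ha2]
      simp [hj₁]
      ring
  · intro j hj0 hj1
    rw [hrow j, if_neg hj0, if_neg hj1]
    ring

-- ==== chunk A ====
noncomputable def emb (n : ℕ) (f : Fin n → ℕ) : Fin n →₀ ℕ :=
  Finsupp.equivFunOnFinite.symm f

@[simp] lemma emb_apply (n : ℕ) (f : Fin n → ℕ) (i : Fin n) : emb n f i = f i := rfl

lemma emb_inj (n : ℕ) {f g : Fin n → ℕ} (h : emb n f = emb n g) : f = g := by
  have := Finsupp.equivFunOnFinite.symm.injective h
  exact this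

lemma xpow_eq_monomial (n : ℕ) (β : Fin n → ℕ) : xpow n β = monomial (emb n β) 1 := by
  rw [xpow, ← MvPolynomial.prod_X_pow_eq_monomial]
  refine (Finset.prod_subset (Finset.subset_univ _) ?_).symm
  intro x _ hx
  have : emb n β x = 0 := Finsupp.notMem_support_iff.mp hx
  rw [emb_apply] at this
  rw [this, pow_zero]

lemma aDet_eq (n : ℕ) (α : Fin n → ℕ) :
    aDet n α = ∑ σ : Equiv.Perm (Fin n),
      monomial (emb n fun i => α (σ i)) ((Equiv.Perm.sign σ : ℤ)) := by
  rw [aDet, Matrix.det_apply']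
  refine Finset.sum_congr rfl fun σ _ => ?_
  have h1 : ∏ i, Matrix.of (fun i j : Fin n => (X j : MvPolynomial (Fin n) ℤ) ^ α i) (σ i) i
      = monomial (emb n fun i => α (σ i)) 1 := by
    rw [← xpow_eq_monomial]
    rw [xpow]
    rfl
  rw [h1, ← eq_intCast (C : ℤ →+* MvPolynomial (Fin n) ℤ) ((Equiv.Perm.sign σ : ℤ)),
    C_mul_monomial, mul_one]

lemma strictMono_perm_eq_one {n : ℕ} (σ : Equiv.Perm (Fin n))
    (h : StrictMono (σ : Fin n → Fin n)) : σ = 1 := by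
  have hinv : StrictMono (σ⁻¹ : Equiv.Perm (Fin n) ) := by
    intro a b hab
    have := h.lt_iff_lt (a := σ⁻¹ a) (b := σ⁻¹ b)
    simp only [← Equiv.Perm.mul_apply, mul_inv_cancel, Equiv.Perm.one_apply] at this
    exact this.mp hab
  haveI : WellFoundedLT (Fin n) := Finite.to_wellFoundedLT
  ext i
  have h1 : i ≤ σ i := h.le_apply
  have h2 : i ≤ σ⁻¹ i := hinv.le_apply
  have h3 : σ i ≤ σ (σ⁻¹ i) := h.monotone h2
  simp only [← Equiv.Perm.mul_apply, mul_inv_cancel, Equiv.Perm.one_apply] at h3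
  simp
  omega

lemma coeff_aDet (n : ℕ) (α e : Fin n → ℕ) (hα : StrictMono α) (he : StrictMono e) :
    MvPolynomial.coeff (emb n e) (aDet n α) = if α = e then 1 else 0 := by
  rw [aDet_eq, MvPolynomial.coeff_sum]
  have key : ∀ σ : Equiv.Perm (Fin n), (fun i => α (σ i)) = e → σ = 1 ∧ α = e := by
    intro σ hσ
    have hm : StrictMono (σ : Fin n → Fin n) := by
      intro i j hij
      have : e i < e j := he hij
      rw [← hσ] at this
      exact (hα.lt_iff_lt).mp this
    have h1 : σ = 1 := strictMono_perm_eq_one σ hm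
    subst h1
    refine ⟨rfl, ?_⟩
    simpa using hσ
  by_cases hae : α = e
  · rw [if_pos hae]
    rw [Finset.sum_eq_single 1]
    · simp [MvPolynomial.coeff_monomial, hae]
    · intro σ _ hσ
      rw [MvPolynomial.coeff_monomial, if_neg]
      intro hcon
      exact hσ (key σ (emb_inj n hcon)).1
    · simp
  · rw [if_neg hae]
    apply Finset.sum_eq_zero
    intro σ _
    rw [MvPolynomial.coeff_monomial, if_neg]
    intro hcon
    exact hae (key σ (emb_inj n hcon)).2
-- ==== chunk B : counting / rearrangement characterization ====
lemma tuple3_le_two (n a b : ℕ) (i : Fin n) : tuple3 n a b 0 i ≤ 2 := by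
  rw [tuple3_apply]; split_ifs <;> omega

lemma card_filter_Ico (n c₁ c₂ : ℕ) (h : c₂ ≤ n) :
    #(Finset.univ.filter fun i : Fin n => c₁ ≤ (i:ℕ) ∧ (i:ℕ) < c₂) = c₂ - c₁ := by
  rw [Finset.card_filter]
  rw [Fin.sum_univ_eq_sum_range (fun p => if c₁ ≤ p ∧ p < c₂ then 1 else 0) n]
  rw [← Finset.card_filter]
  have : (Finset.range n).filter (fun p => c₁ ≤ p ∧ p < c₂) = Finset.Ico c₁ c₂ := by
    ext p
    simp only [Finset.mem_filter, Finset.mem_range, Finset.mem_Ico]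
    omega
  rw [this, Nat.card_Ico]

lemma count_comp_perm (n : ℕ) (f : Fin n → ℕ) (σ : Equiv.Perm (Fin n)) (v : ℕ) :
    #(Finset.univ.filter fun i => f (σ i) = v) = #(Finset.univ.filter fun i => f i = v) :=
  Finset.card_equiv σ (by simp)

lemma tuple3_count1 (n a b : ℕ) (h : a + b ≤ n) :
    #(Finset.univ.filter fun i => tuple3 n a b 0 i = 1) = a := by
  have he : ∀ i : Fin n, tuple3 n a b 0 i = 1 ↔ n - a - b ≤ (i:ℕ) ∧ (i:ℕ) < n - b := by
    intro i
    rw [tuple3_apply]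
    split_ifs <;> simp <;> omega
  rw [Finset.filter_congr (fun i _ => by rw [he i]), card_filter_Ico n _ _ (by omega)]
  omega

lemma tuple3_count2 (n a b : ℕ) (h : a + b ≤ n) :
    #(Finset.univ.filter fun i => tuple3 n a b 0 i = 2) = b := by
  have he : ∀ i : Fin n, tuple3 n a b 0 i = 2 ↔ n - b ≤ (i:ℕ) ∧ (i:ℕ) < n := by
    intro i
    rw [tuple3_apply]
    have := i.isLt
    split_ifs <;> simp <;> omega
  rw [Finset.filter_congr (fun i _ => by rw [he i]), card_filter_Ico n _ _ (le_refl n)]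
  omega

lemma sum_eq_counts (n : ℕ) (β : Fin n → ℕ) (hb : ∀ i, β i ≤ 2) :
    ∑ i, β i = #(Finset.univ.filter fun i => β i = 1) + 2 * #(Finset.univ.filter fun i => β i = 2) := by
  have h1 : ∀ i : Fin n, β i = (if β i = 1 then 1 else 0) + (if β i = 2 then 2 else 0) := by
    intro i
    have := hb i
    split_ifs <;> omega
  rw [Finset.sum_congr rfl (fun i _ => h1 i), Finset.sum_add_distrib]
  congr 1
  · rw [Finset.card_filter]
  · rw [Finset.card_filter, Finset.mul_sum]
    refine Finset.sum_congr rfl fun i _ => ?_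
    split_ifs <;> ring
lemma upclosed_iff (n s : ℕ) (S : Finset (Fin n))
    (hup : ∀ i j : Fin n, i ≤ j → i ∈ S → j ∈ S) (hcard : S.card = s) (i : Fin n) :
    i ∈ S ↔ n - s ≤ (i:ℕ) := by
  have hin : i.val < n := i.isLt
  constructor
  · intro hi
    have hsub : Finset.Ici i ⊆ S := fun j hj => hup i j (Finset.mem_Ici.mp hj) hi
    have := Finset.card_le_card hsub
    rw [Fin.card_Ici, hcard] at this
    omega
  · intro hge
    by_contra hnot
    have hsub : S ⊆ (Finset.Iic i)ᶜ := by
      intro j hj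
      rw [Finset.mem_compl, Finset.mem_Iic]
      intro hji
      exact hnot (hup j i hji hj)
    have := Finset.card_le_card hsub
    rw [Finset.card_compl, Fin.card_Iic, hcard, Fintype.card_fin] at this
    omega

lemma mono_determined (n a b : ℕ) (γ : Fin n → ℕ)
    (hm : ∀ i j : Fin n, i ≤ j → γ i ≤ γ j) (hb : ∀ i, γ i ≤ 2)
    (h1 : #(Finset.univ.filter fun i => γ i = 1) = a)
    (h2 : #(Finset.univ.filter fun i => γ i = 2) = b) :
    γ = tuple3 n a b 0 := by
  have hS1 : ∀ i : Fin n, (1 ≤ γ i) ↔ n - (a+b) ≤ (i:ℕ) := by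
    have hcard : #(Finset.univ.filter fun i => 1 ≤ γ i) = a + b := by
      have : (Finset.univ.filter fun i : Fin n => 1 ≤ γ i)
          = (Finset.univ.filter fun i => γ i = 1) ∪ (Finset.univ.filter fun i => γ i = 2) := by
        ext i
        simp only [Finset.mem_filter, Finset.mem_union, Finset.mem_univ, true_and]
        have := hb i
        omega
      rw [this, Finset.card_union_of_disjoint, h1, h2]
      rw [Finset.disjoint_filter]
      intro i _ hi
      omega
    intro i
    have := upclosed_iff n (a+b) (Finset.univ.filter fun i => 1 ≤ γ i)
      (fun i j hij hi => by
        simp only [Finset.mem_filter, Finset.mem_univ, true_and] at hi ⊢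
        exact le_trans hi (hm i j hij)) hcard i
    simpa using this
  have hS2 : ∀ i : Fin n, (2 ≤ γ i) ↔ n - b ≤ (i:ℕ) := by
    have hcard : #(Finset.univ.filter fun i : Fin n => 2 ≤ γ i) = b := by
      have heq : (Finset.univ.filter fun i : Fin n => 2 ≤ γ i)
          = (Finset.univ.filter fun i => γ i = 2) := by
        ext i
        simp only [Finset.mem_filter, Finset.mem_univ, true_and]
        have := hb i
        omega
      rw [heq, h2]
    intro i
    have := upclosed_iff n b (Finset.univ.filter fun i => 2 ≤ γ i)
      (fun i j hij hi => by
        simp only [Finset.mem_filter, Finset.mem_univ, true_and] at hi ⊢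
        exact le_trans hi (hm i j hij)) hcard i
    simpa using this
  funext i
  rw [tuple3_apply]
  rcases Nat.lt_or_ge (i:ℕ) (n - a - b) with hc | hc
  · rw [if_pos hc]
    have := (hS1 i).mpr
    have h0 : ¬ (1 ≤ γ i) := by
      intro hcon
      have := (hS1 i).mp hcon
      omega
    omega
  · rw [if_neg (by omega)]
    rcases Nat.lt_or_ge (i:ℕ) (n - b) with hc2 | hc2
    · rw [if_pos hc2]
      have hge1 : 1 ≤ γ i := (hS1 i).mpr (by omega)
      have hlt2 : ¬ (2 ≤ γ i) := by
        intro hcon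
        have := (hS2 i).mp hcon
        omega
      omega
    · rw [if_neg (by omega)]
      have hge2 : 2 ≤ γ i := (hS2 i).mpr (by omega)
      have := hb i
      omega

lemma mem_rearr_iff (n k l : ℕ) (hkl : k + l ≤ n) (β : Fin n → ℕ) :
    (β ∈ Finset.univ.image (fun σ : Equiv.Perm (Fin n) => tuple3 n k l 0 ∘ σ)) ↔
    ((∀ i, β i ≤ 2) ∧ #(Finset.univ.filter fun i => β i = 1) = k
      ∧ #(Finset.univ.filter fun i => β i = 2) = l) := by
  constructor
  · intro hβ
    obtain ⟨σ, -, rfl⟩ := Finset.mem_image.mp hβ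
    refine ⟨fun i => tuple3_le_two n k l (σ i), ?_, ?_⟩
    · simp only [Function.comp_apply]
      rw [count_comp_perm n _ σ 1, tuple3_count1 n k l hkl]
    · simp only [Function.comp_apply]
      rw [count_comp_perm n _ σ 2, tuple3_count2 n k l hkl]
  · rintro ⟨hb, h1, h2⟩
    have hmono := Tuple.monotone_sort β
    have hγ : β ∘ (Tuple.sort β) = tuple3 n k l 0 := by
      apply mono_determined
      · intro i j hij
        exact hmono hij
      · intro i; exact hb _
      · simp only [Function.comp_apply]
        rw [count_comp_perm n β (Tuple.sort β) 1]; exact h1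
      · simp only [Function.comp_apply]
        rw [count_comp_perm n β (Tuple.sort β) 2]; exact h2
    refine Finset.mem_image.mpr ⟨(Tuple.sort β)⁻¹, Finset.mem_univ _, ?_⟩
    rw [← hγ]
    funext x
    simp
-- ==== chunk C : coefficient of the product ====
lemma emb_add (n : ℕ) (f g : Fin n → ℕ) :
    emb n f + emb n g = emb n (fun i => f i + g i) :=
  Finsupp.ext fun i => by simp [Finsupp.add_apply]

lemma coeff_prod (n : ℕ) (lam e : Fin n → ℕ) :
    MvPolynomial.coeff (emb n e) (msym n lam * aDet n (deltaN n)) =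
    ∑ σ : Equiv.Perm (Fin n), (Equiv.Perm.sign σ : ℤ) *
      (if (∀ i, ((σ i : ℕ)) ≤ e i) ∧ ((fun i => e i - (σ i : ℕ)) ∈
          Finset.univ.image (fun τ : Equiv.Perm (Fin n) => lam ∘ τ)) then 1 else 0) := by
  have hms : msym n lam = ∑ β ∈ Finset.univ.image (fun τ : Equiv.Perm (Fin n) => lam ∘ τ),
      monomial (emb n β) (1 : ℤ) := by
    rw [msym]
    exact Finset.sum_congr rfl fun β _ => xpow_eq_monomial n β
  have had : aDet n (deltaN n) = ∑ σ : Equiv.Perm (Fin n),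
      monomial (emb n fun i => ((σ i : ℕ))) ((Equiv.Perm.sign σ : ℤ)) := aDet_eq n (deltaN n)
  rw [hms, had, Finset.sum_mul_sum, MvPolynomial.coeff_sum]
  rw [Finset.sum_congr rfl (fun β _ => by rw [MvPolynomial.coeff_sum])]
  rw [Finset.sum_comm]
  refine Finset.sum_congr rfl fun σ _ => ?_
  have hterm : ∀ β, MvPolynomial.coeff (emb n e)
      (monomial (emb n β) (1:ℤ) * monomial (emb n fun i => ((σ i : ℕ))) ((Equiv.Perm.sign σ : ℤ)))
      = if β = (fun i => e i - (σ i : ℕ)) ∧ (∀ i, ((σ i : ℕ)) ≤ e i)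
        then (Equiv.Perm.sign σ : ℤ) else 0 := by
    intro β
    rw [MvPolynomial.monomial_mul, one_mul, MvPolynomial.coeff_monomial, emb_add]
    congr 1
    rw [eq_iff_iff]
    constructor
    · intro h
      have h2 := congrFun (emb_inj n h)
      have hle : ∀ i, (σ i : ℕ) ≤ e i := fun i => by
        have := h2 i
        omega
      refine ⟨funext fun i => ?_, hle⟩
      have := h2 i
      omega
    · rintro ⟨rfl, hle⟩
      congr 1
      funext i
      have := hle i
      beta_reduce
      omega
  rw [Finset.sum_congr rfl fun β _ => hterm β]
  by_cases hQ : ∀ i, ((σ i : ℕ)) ≤ e i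
  · rw [Finset.sum_congr rfl (fun β _ => by rw [if_congr (and_iff_left hQ) rfl rfl]),
      Finset.sum_ite_eq' _ _ (fun _ => (Equiv.Perm.sign σ : ℤ))]
    by_cases hmem : (fun i => e i - (σ i : ℕ)) ∈
        Finset.univ.image (fun τ : Equiv.Perm (Fin n) => lam ∘ τ)
    · rw [if_pos hmem, if_pos ⟨hQ, hmem⟩, mul_one]
    · rw [if_neg hmem, if_neg (fun hc => hmem hc.2), mul_zero]
  · rw [if_neg (fun hc => hQ hc.1), mul_zero]
    apply Finset.sum_eq_zero
    intro β _
    rw [if_neg (fun hc => hQ hc.2)]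

-- ==== chunk D : extraction of K from the identity ====
lemma par_strictMono (n m : ℕ) (ν : Fin n → ℕ) (hν : ν ∈ Par n m) :
    StrictMono (fun i : Fin n => ν i + (i : ℕ)) := by
  rw [Par, Finset.mem_filter] at hν
  intro i j hij
  have := hν.2.1 i j (le_of_lt hij)
  have : (i:ℕ) < (j:ℕ) := hij
  simp only []
  omega

lemma extract (n m : ℕ) (K : (Fin n → ℕ) → (Fin n → ℕ) → ℤ) (hK : IsInvKostka n K)
    (lam : Fin n → ℕ) (hlam : lam ∈ Par n m) (μ : Fin n → ℕ) (hμ : μ ∈ Par n m) :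
    K lam μ = MvPolynomial.coeff (emb n (fun i => μ i + (i:ℕ)))
      (msym n lam * aDet n (deltaN n)) := by
  rw [hK m lam hlam, MvPolynomial.coeff_sum]
  have hterm : ∀ ν ∈ Par n m, MvPolynomial.coeff (emb n (fun i => μ i + (i:ℕ)))
      (C (K lam ν) * aDet n (fun i => ν i + (i:ℕ)))
      = if ν = μ then K lam ν else 0 := by
    intro ν hν
    rw [MvPolynomial.coeff_C_mul,
      coeff_aDet n _ _ (par_strictMono n m ν hν) (par_strictMono n m μ hμ)]
    have hiff : ((fun i : Fin n => ν i + (i:ℕ)) = fun i => μ i + (i:ℕ)) ↔ ν = μ := by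
      constructor
      · intro h
        funext i
        have := congrFun h i
        omega
      · rintro rfl; rfl
    rw [if_congr hiff rfl rfl]
    split_ifs <;> ring
  rw [Finset.sum_congr rfl hterm, Finset.sum_ite_eq' _ _ _, if_pos hμ]
-- ==== chunk E : determinant to signed sum ====
lemma Ent_band (p c : ℕ) (h : c ≤ p + 2 ∧ p ≤ c) :
    Ent p c = Polynomial.X ^ (if p + 2 = c then 1 else 0) := by
  unfold Ent
  by_cases h2 : p + 2 = c
  · rw [if_pos h2, if_pos h2, pow_one]
  · rw [if_neg h2, if_neg h2, pow_zero]
    by_cases h1 : p + 1 = c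
    · rw [if_pos h1]
    · rw [if_neg h1, if_pos (by omega)]

lemma det_to_sum (n : ℕ) (μ : Fin n → ℕ) (l : ℕ) :
    Polynomial.coeff (Amat n μ).det l =
    ∑ σ : Equiv.Perm (Fin n), (Equiv.Perm.sign σ : ℤ) *
      (if (∀ i, ((σ i : ℕ)) ≤ μ i + (i:ℕ) ∧ μ i + (i:ℕ) ≤ (σ i : ℕ) + 2)
          ∧ #(Finset.univ.filter fun i => (σ i : ℕ) + 2 = μ i + (i:ℕ)) = l then 1 else 0) := by
  rw [← Matrix.det_transpose, Matrix.det_apply']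
  have hprod : ∀ σ : Equiv.Perm (Fin n),
      (∏ i, (Amat n μ).transpose (σ i) i)
      = if (∀ i, ((σ i : ℕ)) ≤ μ i + (i:ℕ) ∧ μ i + (i:ℕ) ≤ (σ i : ℕ) + 2)
        then Polynomial.X ^ (#(Finset.univ.filter fun i => (σ i : ℕ) + 2 = μ i + (i:ℕ)))
        else 0 := by
    intro σ
    by_cases hband : ∀ i, ((σ i : ℕ)) ≤ μ i + (i:ℕ) ∧ μ i + (i:ℕ) ≤ (σ i : ℕ) + 2
    · rw [if_pos hband]
      have : ∀ i : Fin n, (Amat n μ).transpose (σ i) i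
          = Polynomial.X ^ (if (σ i : ℕ) + 2 = μ i + (i:ℕ) then 1 else 0) := by
        intro i
        rw [Matrix.transpose_apply]
        show Ent ((σ i : ℕ)) (μ i + (i:ℕ)) = _
        exact Ent_band _ _ ⟨(hband i).2, (hband i).1⟩
      rw [Finset.prod_congr rfl (fun i _ => this i), Finset.prod_pow_eq_pow_sum]
      congr 1
      rw [Finset.card_filter]
    · rw [if_neg hband]
      push_neg at hband
      obtain ⟨i, hi⟩ := hband
      apply Finset.prod_eq_zero (Finset.mem_univ i)
      rw [Matrix.transpose_apply]
      show Ent ((σ i : ℕ)) (μ i + (i:ℕ)) = 0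
      apply Ent_zero
      omega
  rw [Polynomial.finset_sum_coeff]
  refine Finset.sum_congr rfl fun σ _ => ?_
  rw [hprod σ]
  rw [show ((Equiv.Perm.sign σ : ℤ) : Polynomial ℤ)
    = Polynomial.C ((Equiv.Perm.sign σ : ℤ)) from (eq_intCast (Polynomial.C) _).symm]
  by_cases hband : ∀ i, ((σ i : ℕ)) ≤ μ i + (i:ℕ) ∧ μ i + (i:ℕ) ≤ (σ i : ℕ) + 2
  · rw [if_pos hband, Polynomial.coeff_C_mul, Polynomial.coeff_X_pow]
    by_cases hc : #(Finset.univ.filter fun i => (σ i : ℕ) + 2 = μ i + (i:ℕ)) = l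
    · rw [if_pos hc.symm, if_pos ⟨hband, hc⟩]
    · rw [if_neg (fun h : l = _ => hc h.symm), if_neg (fun h => hc h.2)]
  · rw [if_neg hband, if_neg (fun h => hband h.1)]
    simp

-- ==== chunk F : matching the two predicates ====
lemma P_iff_Q (n k l : ℕ) (hkl : k + l ≤ n) (μ : Fin n → ℕ)
    (hsum : ∑ i, μ i = k + 2*l) (σ : Equiv.Perm (Fin n)) :
    ((∀ i, ((σ i : ℕ)) ≤ μ i + (i:ℕ)) ∧ ((fun i => μ i + (i:ℕ) - (σ i : ℕ)) ∈
        Finset.univ.image (fun τ : Equiv.Perm (Fin n) => tuple3 n k l 0 ∘ τ))) ↔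
    ((∀ i, ((σ i : ℕ)) ≤ μ i + (i:ℕ) ∧ μ i + (i:ℕ) ≤ (σ i : ℕ) + 2)
      ∧ #(Finset.univ.filter fun i => (σ i : ℕ) + 2 = μ i + (i:ℕ)) = l) := by
  have hcnteq : (∀ i, ((σ i : ℕ)) ≤ μ i + (i:ℕ)) →
      #(Finset.univ.filter fun i => μ i + (i:ℕ) - (σ i:ℕ) = 2)
      = #(Finset.univ.filter fun i => (σ i : ℕ) + 2 = μ i + (i:ℕ)) := by
    intro hle
    refine Finset.card_bij (fun i _ => i) (fun i hi => ?_) (fun i _ j _ h => h)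
      (fun i hi => ⟨i, ?_, rfl⟩) <;>
    · simp only [Finset.mem_filter, Finset.mem_univ, true_and] at hi ⊢
      have := hle i
      omega
  constructor
  · rintro ⟨hle, hmem⟩
    obtain ⟨hb', h1', h2'⟩ := (mem_rearr_iff n k l hkl _).mp hmem
    have hb : ∀ i, μ i + (i:ℕ) - (σ i:ℕ) ≤ 2 := hb'
    have h2 : #(Finset.univ.filter fun i => μ i + (i:ℕ) - (σ i:ℕ) = 2) = l := h2'
    refine ⟨fun i => ⟨hle i, by have := hb i; have := hle i; omega⟩, ?_⟩
    rw [← h2, hcnteq hle]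
  · rintro ⟨hband, hcnt⟩
    have hle : ∀ i, ((σ i : ℕ)) ≤ μ i + (i:ℕ) := fun i => (hband i).1
    have hv2 : ∀ i, μ i + (i:ℕ) - (σ i:ℕ) ≤ 2 := fun i => by have := hband i; omega
    have hc2 : #(Finset.univ.filter fun i => μ i + (i:ℕ) - (σ i:ℕ) = 2) = l := by
      rw [hcnteq hle, hcnt]
    have hc1 : #(Finset.univ.filter fun i => μ i + (i:ℕ) - (σ i:ℕ) = 1) = k := by
      have hsumβ : ∑ i, (μ i + (i:ℕ) - (σ i:ℕ)) = k + 2*l := by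
        rw [Finset.sum_tsub_distrib _ (fun i _ => hle i)]
        have h1 : ∑ i : Fin n, (μ i + (i:ℕ)) = (k + 2*l) + ∑ i : Fin n, (i:ℕ) := by
          rw [Finset.sum_add_distrib, hsum]
        have h2 : ∑ i : Fin n, ((σ i : ℕ)) = ∑ i : Fin n, (i:ℕ) :=
          Equiv.sum_comp σ (fun i : Fin n => (i:ℕ))
        omega
      have hs : ∑ i, (μ i + (i:ℕ) - (σ i:ℕ))
          = #(Finset.univ.filter fun i => μ i + (i:ℕ) - (σ i:ℕ) = 1)
          + 2 * #(Finset.univ.filter fun i => μ i + (i:ℕ) - (σ i:ℕ) = 2) :=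
        sum_eq_counts n _ hv2
      rw [hsumβ, hc2] at hs
      omega
    exact ⟨hle, (mem_rearr_iff n k l hkl _).mpr ⟨fun i => hv2 i, hc1, hc2⟩⟩

-- ==== chunk G : partition facts ====
lemma par_sum (n m : ℕ) (μ : Fin n → ℕ) (hμ : μ ∈ Par n m) : ∑ i, μ i = m := by
  rw [Par, Finset.mem_filter] at hμ
  exact hμ.2.2

lemma par_mono (n m : ℕ) (μ : Fin n → ℕ) (hμ : μ ∈ Par n m) :
    ∀ i j : Fin n, i ≤ j → μ i ≤ μ j := by
  rw [Par, Finset.mem_filter] at hμ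
  exact hμ.2.1

lemma tuple3_mem_Par (n a b : ℕ) (h : a + b ≤ n) : tuple3 n a b 0 ∈ Par n (a + 2*b) := by
  rw [Par, Finset.mem_filter]
  refine ⟨?_, ?_, ?_⟩
  · rw [Fintype.mem_piFinset]
    intro i
    rw [Finset.mem_range]
    have := i.isLt
    rw [tuple3_apply]
    split_ifs <;> omega
  · intro i j hij
    have hij' : (i:ℕ) ≤ (j:ℕ) := hij
    rw [tuple3_apply, tuple3_apply]
    split_ifs <;> omega
  · rw [sum_eq_counts n _ (tuple3_le_two n a b), tuple3_count1 n a b h,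
      tuple3_count2 n a b h]

lemma par_le2_eq (n m : ℕ) (μ : Fin n → ℕ) (hμ : μ ∈ Par n m) (hle : ∀ i, μ i ≤ 2) :
    ∃ a b, μ = tuple3 n a b 0 ∧ m = a + 2*b ∧ a + b ≤ n := by
  have hmono := par_mono n m μ hμ
  have hsum := par_sum n m μ hμ
  refine ⟨#(Finset.univ.filter fun i => μ i = 1), #(Finset.univ.filter fun i => μ i = 2),
    mono_determined n _ _ μ hmono hle rfl rfl, ?_, ?_⟩
  · rw [← hsum, sum_eq_counts n μ hle]
  · have hd : Disjoint (Finset.univ.filter fun i : Fin n => μ i = 1)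
        (Finset.univ.filter fun i : Fin n => μ i = 2) := by
      rw [Finset.disjoint_filter]
      intro i _ hi
      omega
    have := Finset.card_le_univ ((Finset.univ.filter fun i : Fin n => μ i = 1)
      ∪ (Finset.univ.filter fun i : Fin n => μ i = 2))
    rw [Finset.card_union_of_disjoint hd] at this
    simpa using this


/-- `K⁻¹_{(1^k,2^l),μ} = 0` unless `μ = (1^{k+2t},2^{l-t})`, in which case it equals
`(-1)^t (k+t)!/(k!·t!)`. -/
theorem stmt14 (n k l : ℕ) (hn : k + 2 * l ≤ n)
    (K : (Fin n → ℕ) → (Fin n → ℕ) → ℤ) (hK : IsInvKostka n K) :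
    (∀ μ ∈ Par n (k + 2 * l),
        (∀ t ≤ l, μ ≠ tuple3 n (k + 2 * t) (l - t) 0) → K (tuple3 n k l 0) μ = 0) ∧
    ∀ t ≤ l, K (tuple3 n k l 0) (tuple3 n (k + 2 * t) (l - t) 0)
      = (-1) ^ t * (Nat.choose (k + t) t : ℤ) := by
  have hkl : k + l ≤ n := by omega
  have hlam : tuple3 n k l 0 ∈ Par n (k + 2 * l) := tuple3_mem_Par n k l hkl
  have key : ∀ μ ∈ Par n (k + 2 * l),
      K (tuple3 n k l 0) μ = Polynomial.coeff (Amat n μ).det l := by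
    intro μ hμ
    have hsum : ∑ i, μ i = k + 2 * l := par_sum n _ μ hμ
    rw [extract n (k + 2*l) K hK _ hlam μ hμ, coeff_prod, det_to_sum]
    refine Finset.sum_congr rfl fun σ _ => ?_
    have hiff := P_iff_Q n k l hkl μ hsum σ
    congr 1
    exact if_congr hiff rfl rfl
  constructor
  · intro μ hμ hne
    rcases Nat.eq_zero_or_pos n with rfl | hn0
    · exact absurd (funext fun i => i.elim0) (hne 0 (Nat.zero_le l))
    by_cases hle : ∀ i, μ i ≤ 2
    · obtain ⟨a, b, rfl, hmab, habn⟩ := par_le2_eq n (k + 2*l) μ hμ hle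
      have hbl : l < b := by
        by_contra hcon
        push_neg at hcon
        refine hne (l - b) (by omega) ?_
        have h1 : k + 2 * (l - b) = a := by omega
        have h2 : l - (l - b) = b := by omega
        rw [h1, h2]
      rw [key _ hμ, detAmat n a b habn, Polynomial.coeff_X_pow_mul', if_neg (by omega)]
    · push_neg at hle
      obtain ⟨i0, hi0⟩ := hle
      rw [key μ hμ]
      have hn1 : n - 1 < n := by omega
      have hrow : ∀ j : Fin n, Amat n μ ⟨n-1, hn1⟩ j = 0 := by
        intro j
        show Ent (j:ℕ) (μ ⟨n-1, hn1⟩ + ((⟨n-1, hn1⟩ : Fin n) : ℕ)) = 0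
        have hvtop : ((⟨n-1, hn1⟩ : Fin n) : ℕ) = n - 1 := rfl
        have hmono := par_mono n _ μ hμ
        have h3 : 3 ≤ μ ⟨n-1, hn1⟩ := by
          refine le_trans (by omega : 3 ≤ μ i0) (hmono i0 ⟨n-1, hn1⟩ ?_)
          have := i0.isLt
          rw [Fin.le_def, hvtop]
          omega
        apply Ent_zero
        have := j.isLt
        omega
      rw [Matrix.det_eq_zero_of_row_eq_zero _ hrow, Polynomial.coeff_zero]
  · intro t ht
    have hmem : tuple3 n (k + 2*t) (l - t) 0 ∈ Par n (k + 2 * l) := by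
      have h := tuple3_mem_Par n (k + 2*t) (l - t) (by omega)
      rwa [show (k + 2*t) + 2*(l - t) = k + 2 * l by omega] at h
    rw [key _ hmem, detAmat n (k + 2*t) (l - t) (by omega), Polynomial.coeff_X_pow_mul',
      if_pos (by omega : l - t ≤ l), Gpoly_coeff, show l - (l - t) = t by omega,
      show (k + 2*t) - t = k + t by omega]
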